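/- Let V₁ and V₂ be nonempty finite types, v* ∈ V₁, N ≥ 1, c > 0, and D a divergence on S(V₁) that is jointly convex. Let Q 0, …, Q N ∈ S(V₁) satisfy Q i (v*) > Q (i−1) (v*) for all 1 ≤ i ≤ N. Then there exists ε₀ > 0 such that: for every family R assigning to each 0 ≤ i ≤ N and v ∈ V₂ a distribution R i v ∈ S(V₁) with R i v (v*) = c · Q i (v*) for all i and v, every family of weights p 0, …, p N ∈ S(V₂), and every Ψ : V₂ → S(V₁), if ∑ v ∈ V₂, p i (v) · D (Ψ(v)) (R i v) ≤ ε₀ for every 0 ≤ i ≤ N, then the mixtures F i := ∑ v ∈ V₂, p i (v) • Ψ(v) satisfy F i (v*) > F (i−1) (v*) for all 1 ≤ i ≤ N. -/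

import Mathlib

open scoped BigOperators

/-- A divergence on the probability simplex `stdSimplex ℝ W`: continuous (in the
subspace topology on the simplex), nonnegative, and vanishing exactly on the diagonal. -/
def IsDivergence {W : Type*} [Fintype W] (D : (W → ℝ) → (W → ℝ) → ℝ) : Prop :=
  ContinuousOn (fun pq : (W → ℝ) × (W → ℝ) => D pq.1 pq.2)
      (stdSimplex ℝ W ×ˢ stdSimplex ℝ W) ∧
    (∀ p ∈ stdSimplex ℝ W, ∀ q ∈ stdSimplex ℝ W, 0 ≤ D p q) ∧
    (∀ p ∈ stdSimplex ℝ W, ∀ q ∈ stdSimplex ℝ W, (D p q = 0 ↔ p = q))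

/-- `D` is jointly convex on the simplex. -/
def JointlyConvexDiv {W : Type*} [Fintype W] (D : (W → ℝ) → (W → ℝ) → ℝ) : Prop :=
  ∀ p₁ ∈ stdSimplex ℝ W, ∀ p₂ ∈ stdSimplex ℝ W, ∀ q₁ ∈ stdSimplex ℝ W,
    ∀ q₂ ∈ stdSimplex ℝ W, ∀ t ∈ Set.Icc (0 : ℝ) 1,
      D (t • p₁ + (1 - t) • p₂) (t • q₁ + (1 - t) • q₂) ≤
        t * D p₁ q₁ + (1 - t) * D p₂ q₂

lemma aux_div_small {W : Type*} [Fintype W] (D : (W → ℝ) → (W → ℝ) → ℝ)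
    (hD : IsDivergence D) (w : W) (η : ℝ) (hη : 0 < η) :
    ∃ ε > (0:ℝ), ∀ p ∈ stdSimplex ℝ W, ∀ q ∈ stdSimplex ℝ W,
      D p q ≤ ε → |p w - q w| < η := by
  obtain ⟨hDc, hDnn, hDzero⟩ := hD
  set K := (stdSimplex ℝ W ×ˢ stdSimplex ℝ W) ∩
      {pq : (W → ℝ) × (W → ℝ) | η ≤ |pq.1 w - pq.2 w|} with hK
  have hKcomp : IsCompact K := by
    apply ((isCompact_stdSimplex ℝ W).prod (isCompact_stdSimplex ℝ W)).inter_right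
    apply isClosed_le continuous_const
    exact (continuous_abs.comp (((continuous_apply w).comp continuous_fst).sub
      ((continuous_apply w).comp continuous_snd)))
  by_cases hKe : K.Nonempty
  · obtain ⟨pq₀, hpq₀, hmin⟩ := hKcomp.exists_isMinOn hKe
      (hDc.mono (Set.inter_subset_left))
    have hm : 0 < D pq₀.1 pq₀.2 := by
      rcases (hDnn _ hpq₀.1.1 _ hpq₀.1.2).lt_or_eq with h | h
      · exact h
      · exfalso
        have heq := (hDzero _ hpq₀.1.1 _ hpq₀.1.2).mp h.symm
        have : η ≤ |pq₀.1 w - pq₀.2 w| := hpq₀.2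
        rw [heq] at this
        simp at this
        linarith
    refine ⟨D pq₀.1 pq₀.2 / 2, by positivity, ?_⟩
    intro p hp q hq hle
    by_contra hcon
    push_neg at hcon
    have hmem : (p, q) ∈ K := ⟨⟨hp, hq⟩, hcon⟩
    have := isMinOn_iff.mp hmin (p, q) hmem
    simp only at this
    linarith
  · refine ⟨1, one_pos, ?_⟩
    intro p hp q hq _
    by_contra hcon
    push_neg at hcon
    exact hKe ⟨(p, q), ⟨hp, hq⟩, hcon⟩

lemma aux_jensen {W V : Type*} [Fintype W] [Fintype V]
    (D : (W → ℝ) → (W → ℝ) → ℝ) (hconv : JointlyConvexDiv D)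
    (p : V → ℝ) (hp : p ∈ stdSimplex ℝ V)
    (Ψ R : V → W → ℝ) (hΨ : ∀ v, Ψ v ∈ stdSimplex ℝ W)
    (hR : ∀ v, R v ∈ stdSimplex ℝ W) :
    D (∑ v, p v • Ψ v) (∑ v, p v • R v) ≤ ∑ v, p v * D (Ψ v) (R v) := by
  have hconvon : ConvexOn ℝ (stdSimplex ℝ W ×ˢ stdSimplex ℝ W)
      (fun pq : (W → ℝ) × (W → ℝ) => D pq.1 pq.2) := by
    refine ⟨(convex_stdSimplex ℝ W).prod (convex_stdSimplex ℝ W), ?_⟩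
    intro x hx y hy a b ha hb hab
    have hb' : b = 1 - a := by linarith
    have := hconv x.1 hx.1 y.1 hy.1 x.2 hx.2 y.2 hy.2 a ⟨ha, by linarith⟩
    simpa [hb'] using this
  have key := hconvon.map_sum_le (t := Finset.univ)
    (w := p) (p := fun v => (Ψ v, R v))
    (fun v _ => hp.1 v) hp.2 (fun v _ => Set.mk_mem_prod (hΨ v) (hR v))
  simpa [Prod.fst_sum, Prod.snd_sum, Prod.smul_fst, Prod.smul_snd] using key

/-- **Converse multiple-lines-of-evidence proposition for an embedded scientist.**
If the universe's limit response distributions `Q 0, …, Q N` assign strictly increasing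
probability to `vstar`, then there is `ε₀ > 0` such that: whenever the brain-state
conditioned distributions `R i v` satisfy `R i v vstar = c * Q i vstar` and the scientist
is embed-calibrated, i.e. `∑ v, p i v * D (Ψ v) (R i v) ≤ ε₀`, the scientist's embedded
prediction distributions `F i = ∑ v, p i v • Ψ v` assign strictly increasing probability
to `vstar`. -/
theorem multiple_evidence_universe_to_scientist
    {V₁ V₂ : Type*} [Fintype V₁] [Nonempty V₁] [Fintype V₂] [Nonempty V₂]
    (vstar : V₁) (N : ℕ) (hN : 1 ≤ N) (c : ℝ) (hc : 0 < c)
    (D : (V₁ → ℝ) → (V₁ → ℝ) → ℝ) (hD : IsDivergence D) (hDconv : JointlyConvexDiv D)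
    (Q : ℕ → V₁ → ℝ) (hQ : ∀ i ≤ N, Q i ∈ stdSimplex ℝ V₁)
    (hmono : ∀ i, 1 ≤ i → i ≤ N → Q (i - 1) vstar < Q i vstar) :
    ∃ ε₀ : ℝ, 0 < ε₀ ∧
      ∀ (R : ℕ → V₂ → V₁ → ℝ) (p : ℕ → V₂ → ℝ) (Ψ : V₂ → V₁ → ℝ),
        (∀ i ≤ N, ∀ v : V₂, R i v ∈ stdSimplex ℝ V₁) →
        (∀ i ≤ N, ∀ v : V₂, R i v vstar = c * Q i vstar) →
        (∀ i ≤ N, p i ∈ stdSimplex ℝ V₂) →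
        (∀ v : V₂, Ψ v ∈ stdSimplex ℝ V₁) →
        (∀ i ≤ N, ∑ v : V₂, p i v * D (Ψ v) (R i v) ≤ ε₀) →
        ∀ i, 1 ≤ i → i ≤ N →
          (∑ v : V₂, p (i - 1) v • Ψ v) vstar < (∑ v : V₂, p i v • Ψ v) vstar := by
  classical
  have hne : (Finset.Icc 1 N).Nonempty := ⟨1, Finset.mem_Icc.mpr ⟨le_rfl, hN⟩⟩
  set δ := (Finset.Icc 1 N).inf' hne (fun i => c * (Q i vstar - Q (i - 1) vstar)) with hδ
  have hδpos : 0 < δ := by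
    rw [hδ, Finset.lt_inf'_iff]
    intro i hi
    obtain ⟨h1, h2⟩ := Finset.mem_Icc.mp hi
    have := hmono i h1 h2
    exact mul_pos hc (by linarith)
  obtain ⟨ε, hεpos, hε⟩ := aux_div_small D hD vstar (δ / 2) (by linarith)
  refine ⟨ε, hεpos, ?_⟩
  intro R p Ψ hR hRv hp hΨ hcal i h1 h2
  have key : ∀ j ≤ N, |(∑ v : V₂, p j v • Ψ v) vstar - c * Q j vstar| < δ / 2 := by
    intro j hj
    have hF : (∑ v : V₂, p j v • Ψ v) ∈ stdSimplex ℝ V₁ :=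
      (convex_stdSimplex ℝ V₁).sum_mem (fun v _ => (hp j hj).1 v) (hp j hj).2
        (fun v _ => hΨ v)
    have hG : (∑ v : V₂, p j v • R j v) ∈ stdSimplex ℝ V₁ :=
      (convex_stdSimplex ℝ V₁).sum_mem (fun v _ => (hp j hj).1 v) (hp j hj).2
        (fun v _ => hR j hj v)
    have hDle : D (∑ v : V₂, p j v • Ψ v) (∑ v : V₂, p j v • R j v) ≤ ε :=
      le_trans (aux_jensen D hDconv (p j) (hp j hj) Ψ (R j) hΨ (hR j hj)) (hcal j hj)
    have hclose := hε _ hF _ hG hDle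
    have hGv : (∑ v : V₂, p j v • R j v) vstar = c * Q j vstar := by
      rw [Finset.sum_apply]
      simp only [Pi.smul_apply, smul_eq_mul]
      rw [Finset.sum_congr rfl (fun v _ => by rw [hRv j hj v]), ← Finset.sum_mul,
        (hp j hj).2, one_mul]
    rwa [hGv] at hclose
  have k1 := abs_lt.mp (key i h2)
  have k0 := abs_lt.mp (key (i - 1) (le_trans (Nat.sub_le i 1) h2))
  have hgap : δ ≤ c * (Q i vstar - Q (i - 1) vstar) :=
    Finset.inf'_le _ (Finset.mem_Icc.mpr ⟨h1, h2⟩)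
  rw [mul_sub] at hgap
  linarith [k1.1, k0.2]
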